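/- Let f, g : ℝ → ℝ be continuously differentiable and let (q,p,s) : ℝ → ℝ³ be a differentiable curve satisfying q̇ = s, ṡ = −f(q)s − g(q), ṗ = −p² − f(q)p − f′(q)s − g′(q). Then the function H(t) := p(t)s(t) + f(q(t))s(t) + g(q(t)) satisfies the differential equation Ḣ(t) = −(p(t) + f(q(t)))·H(t) for all t. Consequently, if the initial condition satisfies p(0)s(0) + f(q(0))s(0) + g(q(0)) = 0, then p(t)s(t) + f(q(t))s(t) + g(q(t)) = 0 for all t; in particular ṡ(t) = p(t)·q̇(t) for all t, i.e. p(t) is the slope ds/dq of the orbit in the (q,s)-plane wherever s(t) ≠ 0. -/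

import Mathlib

/-- along solutions of the contact Hamiltonisation of a Liénard system,
the Hamiltonian H(t) = p s + f(q) s + g(q) satisfies Ḣ = −(p + f(q))·H; hence if H(0) = 0
then H ≡ 0, and in particular ṡ(t) = p(t)·q̇(t) for all t (p is the slope ds/dq). -/
theorem lienard_contact_hamiltonian_decay
    (f g : ℝ → ℝ) (hf : ContDiff ℝ 1 f) (hg : ContDiff ℝ 1 g)
    (q p s : ℝ → ℝ)
    (hq : Differentiable ℝ q) (hp : Differentiable ℝ p) (hs : Differentiable ℝ s)
    (h1 : ∀ t : ℝ, deriv q t = s t)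
    (h2 : ∀ t : ℝ, deriv s t = - f (q t) * s t - g (q t))
    (h3 : ∀ t : ℝ, deriv p t =
      - (p t) ^ 2 - f (q t) * p t - deriv f (q t) * s t - deriv g (q t))
    (H : ℝ → ℝ)
    (hH : ∀ t : ℝ, H t = p t * s t + f (q t) * s t + g (q t)) :
    (∀ t : ℝ, deriv H t = -(p t + f (q t)) * H t) ∧
    (H 0 = 0 →
      (∀ t : ℝ, H t = 0) ∧ (∀ t : ℝ, deriv s t = p t * deriv q t)) := by
  have hfd : Differentiable ℝ f := hf.differentiable one_ne_zero
  have hgd : Differentiable ℝ g := hg.differentiable one_ne_zero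
  have hHfun : H = fun t => p t * s t + f (q t) * s t + g (q t) := funext hH
  have key : ∀ t : ℝ, HasDerivAt H (-(p t + f (q t)) * H t) t := by
    intro t
    have hq' : HasDerivAt q (s t) t := h1 t ▸ (hq t).hasDerivAt
    have hs' : HasDerivAt s (- f (q t) * s t - g (q t)) t := h2 t ▸ (hs t).hasDerivAt
    have hp' : HasDerivAt p (- (p t) ^ 2 - f (q t) * p t - deriv f (q t) * s t - deriv g (q t)) t :=
      h3 t ▸ (hp t).hasDerivAt
    have hfq : HasDerivAt (fun u => f (q u)) (deriv f (q t) * s t) t :=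
      ((hfd (q t)).hasDerivAt).comp t hq'
    have hgq : HasDerivAt (fun u => g (q u)) (deriv g (q t) * s t) t :=
      ((hgd (q t)).hasDerivAt).comp t hq'
    have := ((hp'.mul hs').add (hfq.mul hs')).add hgq
    rw [hHfun]
    refine this.congr_deriv ?_
    beta_reduce; ring
  have hderiv : ∀ t : ℝ, deriv H t = -(p t + f (q t)) * H t := fun t => (key t).deriv
  refine ⟨hderiv, fun h0 => ?_⟩
  have hc : Continuous fun t => p t + f (q t) :=
    hp.continuous.add (hfd.continuous.comp hq.continuous)
  set A : ℝ → ℝ := fun t => ∫ x in (0:ℝ)..t, (p x + f (q x)) with hA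
  have hA' : ∀ t : ℝ, HasDerivAt A (p t + f (q t)) t := fun t =>
    (hc.integral_hasStrictDerivAt 0 t).hasDerivAt
  set G : ℝ → ℝ := fun t => H t * Real.exp (A t) with hG
  have hG' : ∀ t : ℝ, HasDerivAt G 0 t := by
    intro t
    have := (key t).mul ((hA' t).exp)
    refine this.congr_deriv ?_
    ring
  have hGc : ∀ t : ℝ, G t = G 0 := by
    intro t
    apply is_const_of_deriv_eq_zero (fun u => (hG' u).differentiableAt)
    intro u; exact (hG' u).deriv
  have hHz : ∀ t : ℝ, H t = 0 := by
    intro t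
    have hG0 : G 0 = 0 := by simp [hG, h0]
    have := hGc t
    rw [hG0] at this
    have he := Real.exp_ne_zero (A t)
    exact (mul_eq_zero.mp this).resolve_right he
  refine ⟨hHz, fun t => ?_⟩
  have := hHz t
  rw [hH t] at this
  rw [h2 t, h1 t]
  linarith
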